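/- arXiv:2308.09310 — 3 statements merged into one kernel-verified Lean document; each statement's English description precedes it below -/
import Mathlib

section
/- If each f_i : H → ℝ is convex and differentiable with L-Lipschitz gradient, and F = (1/n) ∑ᵢ f_i satisfies ∇F(y) = 0, then (1/n) ∑ᵢ ‖∇f_i(x) − ∇f_i(y)‖² ≤ 2L (F(x) − F(y)) for all x. -/
open scoped BigOperators
open InnerProductSpace

local notation "⟪" a ", " b "⟫" => inner (𝕜 := ℝ) a b

lemma lineDeriv' {H : Type*} [NormedAddCommGroup H] [InnerProductSpace ℝ H] [CompleteSpace H]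
    (f : H → ℝ) (g : H → H) (hgrad : ∀ x, HasGradientAt f (g x) x) (a v : H) (t : ℝ) :
    HasDerivAt (fun s : ℝ => f (a + s • v)) ⟪g (a + t • v), v⟫ t := by
  have h1 : HasDerivAt (fun s : ℝ => a + s • v) v t := by
    simpa using ((hasDerivAt_id t).smul_const v).const_add a
  have h2 := (hgrad (a + t • v)).hasFDerivAt
  have h3 := h2.comp_hasDerivAt t h1
  simp at h3
  exact h3

lemma firstOrder' {H : Type*} [NormedAddCommGroup H] [InnerProductSpace ℝ H] [CompleteSpace H]
    (f : H → ℝ) (g : H → H) (hconv : ConvexOn ℝ Set.univ f)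
    (hgrad : ∀ x, HasGradientAt f (g x) x) (a b : H) :
    f a + ⟪g a, b - a⟫ ≤ f b := by
  set v := b - a with hv
  have hφ : ConvexOn ℝ Set.univ (fun t : ℝ => f (a + t • v)) := by
    have := hconv.comp_affineMap (AffineMap.lineMap a b)
    have he : (fun t : ℝ => f (a + t • v)) = (f ∘ AffineMap.lineMap a b) := by
      funext t
      simp [AffineMap.lineMap_apply, hv]
      rw [add_comm]
    rw [he]
    simpa using this
  have hd : HasDerivAt (fun t : ℝ => f (a + t • v)) ⟪g a, v⟫ 0 := by
    have := lineDeriv' f g hgrad a v 0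
    simpa using this
  have := hφ.le_slope_of_hasDerivAt (Set.mem_univ (0:ℝ)) (Set.mem_univ (1:ℝ)) one_pos hd
  rw [slope_def_field] at this
  simp at this
  have h1 : a + v = b := by simp [hv]
  rw [h1] at this
  linarith

lemma descent' {H : Type*} [NormedAddCommGroup H] [InnerProductSpace ℝ H] [CompleteSpace H]
    (f : H → ℝ) (g : H → H) (L : ℝ) (hL : 0 < L)
    (hgrad : ∀ x, HasGradientAt f (g x) x)
    (hlip : ∀ x y, ‖g x - g y‖ ≤ L * ‖x - y‖) (a b : H) :
    f b ≤ f a + ⟪g a, b - a⟫ + L / 2 * ‖b - a‖ ^ 2 := by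
  set v := b - a with hv
  set ψ : ℝ → ℝ := fun t => f (a + t • v) - t * ⟪g a, v⟫ - L * t ^ 2 / 2 * ‖v‖ ^ 2 with hψ
  have hdψ : ∀ t : ℝ, HasDerivAt ψ (⟪g (a + t • v), v⟫ - ⟪g a, v⟫ - L * t * ‖v‖ ^ 2) t := by
    intro t
    have h1 := lineDeriv' f g hgrad a v t
    have h2 : HasDerivAt (fun t : ℝ => t * ⟪g a, v⟫) ⟪g a, v⟫ t := by
      simpa using (hasDerivAt_id t).mul_const ⟪g a, v⟫
    have h3 : HasDerivAt (fun t : ℝ => L * t ^ 2 / 2 * ‖v‖ ^ 2) (L * t * ‖v‖ ^ 2) t := by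
      have : HasDerivAt (fun t : ℝ => t ^ 2) (2 * t) t := by
        simpa using hasDerivAt_pow 2 t
      have := ((this.const_mul L).div_const 2).mul_const (‖v‖ ^ 2)
      exact this.congr_deriv (by ring)
    exact (h1.sub h2).sub h3
  have hanti : AntitoneOn ψ (Set.Icc 0 1) := by
    apply antitoneOn_of_deriv_nonpos (convex_Icc 0 1)
    · exact fun t _ => ((hdψ t).continuousAt).continuousWithinAt
    · exact fun t _ => ((hdψ t).differentiableAt).differentiableWithinAt
    · intro t ht
      rw [interior_Icc] at ht
      rw [(hdψ t).deriv]
      have hb1 : ⟪g (a + t • v) - g a, v⟫ ≤ ‖g (a + t • v) - g a‖ * ‖v‖ :=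
        real_inner_le_norm _ _
      have hb2 : ‖g (a + t • v) - g a‖ ≤ L * (t * ‖v‖) := by
        have := hlip (a + t • v) a
        simpa [norm_smul, abs_of_pos ht.1, mul_assoc] using this
      have hb3 : ‖g (a + t • v) - g a‖ * ‖v‖ ≤ L * (t * ‖v‖) * ‖v‖ :=
        mul_le_mul_of_nonneg_right hb2 (norm_nonneg _)
      rw [inner_sub_left] at hb1
      nlinarith [norm_nonneg v]
  have h10 := hanti (Set.mem_Icc.2 ⟨le_refl 0, zero_le_one⟩)
      (Set.mem_Icc.2 ⟨zero_le_one, le_refl 1⟩) zero_le_one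
  have h1 : a + (1:ℝ) • v = b := by simp [hv]
  simp only [hψ, h1, zero_smul, add_zero, one_mul, one_pow, zero_pow, mul_zero, zero_mul,
    sub_zero, mul_one] at h10
  nlinarith

lemma cocoercive' {H : Type*} [NormedAddCommGroup H] [InnerProductSpace ℝ H] [CompleteSpace H]
    (f : H → ℝ) (g : H → H) (L : ℝ) (hL : 0 < L)
    (hconv : ConvexOn ℝ Set.univ f)
    (hgrad : ∀ x, HasGradientAt f (g x) x)
    (hlip : ∀ x y, ‖g x - g y‖ ≤ L * ‖x - y‖) (a b : H) :
    ‖g b - g a‖ ^ 2 ≤ 2 * L * (f b - f a - ⟪g a, b - a⟫) := by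
  set d := g b - g a with hd
  set c := b - (L⁻¹) • d with hc
  have hA := firstOrder' f g hconv hgrad a c
  have hB := descent' f g L hL hgrad hlip b c
  have hcb : c - b = -(L⁻¹ • d) := by rw [hc]; abel
  have hca : c - a = (b - a) - L⁻¹ • d := by rw [hc]; abel
  have e1 : ⟪g b, c - b⟫ = -(L⁻¹ * ⟪g b, d⟫) := by
    rw [hcb, inner_neg_right, real_inner_smul_right]
  have e2 : ‖c - b‖ ^ 2 = L⁻¹ ^ 2 * ‖d‖ ^ 2 := by
    rw [hcb, norm_neg, norm_smul]
    simp [abs_of_pos (inv_pos.2 hL), mul_pow]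
  have e3 : ⟪g a, c - a⟫ = ⟪g a, b - a⟫ - L⁻¹ * ⟪g a, d⟫ := by
    rw [hca, inner_sub_right, real_inner_smul_right]
  have e4 : ⟪g b, d⟫ - ⟪g a, d⟫ = ‖d‖ ^ 2 := by
    rw [← inner_sub_left, ← hd, real_inner_self_eq_norm_sq]
  rw [e1, e2] at hB
  rw [e3] at hA
  have hL' : L⁻¹ * L = 1 := inv_mul_cancel₀ hL.ne'
  have hL'' : L / 2 * L⁻¹ ^ 2 = L⁻¹ / 2 := by field_simp
  have e5 : L⁻¹ * ⟪g b, d⟫ = L⁻¹ * ⟪g a, d⟫ + L⁻¹ * ‖d‖ ^ 2 := by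
    rw [← mul_add]; congr 1; linarith
  have h5 : L⁻¹ / 2 * ‖d‖ ^ 2 ≤ f b - f a - ⟪g a, b - a⟫ := by nlinarith [hA.trans hB]
  nlinarith [mul_le_mul_of_nonneg_left h5 (by positivity : (0:ℝ) ≤ 2 * L)]

theorem stmt0 {H : Type*} [NormedAddCommGroup H] [InnerProductSpace ℝ H] [CompleteSpace H]
    (n : ℕ) (hn : 1 ≤ n) (f : Fin n → H → ℝ) (g : Fin n → H → H) (L : ℝ) (hL : 0 < L)
    (hconv : ∀ i, ConvexOn ℝ Set.univ (f i))
    (hgrad : ∀ i x, HasGradientAt (f i) (g i x) x)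
    (hlip : ∀ i x y, ‖g i x - g i y‖ ≤ L * ‖x - y‖)
    (y : H) (hy : (1 / (n : ℝ)) • ∑ i, g i y = 0) (x : H) :
    (1 / (n : ℝ)) * ∑ i, ‖g i x - g i y‖ ^ 2 ≤
      2 * L * ((1 / (n : ℝ)) * ∑ i, f i x - (1 / (n : ℝ)) * ∑ i, f i y) := by
  have hn0 : (0:ℝ) < (n:ℝ) := by exact_mod_cast hn
  have hsum0 : (∑ i, g i y) = 0 := by
    have := smul_eq_zero.1 hy
    rcases this with h | h
    · exact absurd h (by positivity)
    · exact h
  have hinner0 : ⟪∑ i, g i y, x - y⟫ = 0 := by rw [hsum0, inner_zero_left]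
  have hkey : ∑ i, ‖g i x - g i y‖ ^ 2 ≤ 2 * L * (∑ i, f i x - ∑ i, f i y) := by
    have hterm : ∀ i, ‖g i x - g i y‖ ^ 2 ≤
        2 * L * (f i x - f i y - ⟪g i y, x - y⟫) := fun i =>
      cocoercive' (f i) (g i) L hL (hconv i) (hgrad i) (hlip i) y x
    calc ∑ i, ‖g i x - g i y‖ ^ 2
        ≤ ∑ i, 2 * L * (f i x - f i y - ⟪g i y, x - y⟫) :=
          Finset.sum_le_sum fun i _ => hterm i
      _ = 2 * L * (∑ i, f i x - ∑ i, f i y) - 2 * L * ⟪∑ i, g i y, x - y⟫ := by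
          simp only [sum_inner, mul_sub, Finset.mul_sum, ← Finset.sum_sub_distrib]
      _ = 2 * L * (∑ i, f i x - ∑ i, f i y) := by rw [hinner0]; ring
  have hnn : (0:ℝ) ≤ 1 / (n:ℝ) := by positivity
  have := mul_le_mul_of_nonneg_left hkey hnn
  calc (1 / (n:ℝ)) * ∑ i, ‖g i x - g i y‖ ^ 2
      ≤ (1 / (n:ℝ)) * (2 * L * (∑ i, f i x - ∑ i, f i y)) := this
    _ = 2 * L * ((1 / (n:ℝ)) * ∑ i, f i x - (1 / (n:ℝ)) * ∑ i, f i y) := by ring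
end

section
/- Let f : H → ℝ be convex differentiable, α > 0, e, x ∈ H, x⁺ = prox_{αf}(x + αe), and v = ∇f(x) − e. Then for every z ∈ H: ‖x⁺ − z‖² ≤ ‖x − z‖² − 2α (f(x) − f(z)) + α²‖v‖² − 2α⟪e, z − x⟫ − α²‖∇f(x) − ∇f(x⁺)‖². -/
lemma grad_ineq {H : Type*} [NormedAddCommGroup H] [InnerProductSpace ℝ H] [CompleteSpace H]
    {f : H → ℝ} (hconv : ConvexOn ℝ Set.univ f) {a ga : H}
    (h : HasGradientAt f ga a) (b : H) :
    f a + (inner ℝ ga (b - a) : ℝ) ≤ f b := by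
  have hc : HasDerivAt (fun t : ℝ => a + t • (b - a)) (b - a) 0 := by
    simpa using (((hasDerivAt_id (0:ℝ)).smul_const (b - a)).const_add a)
  have hψ : HasDerivAt (fun t : ℝ => f (a + t • (b - a))) (inner ℝ ga (b - a) : ℝ) 0 := by
    have ha0 : a = a + (0:ℝ) • (b - a) := by simp
    have hfd : HasFDerivAt f ((InnerProductSpace.toDual ℝ H) ga) (a + (0:ℝ) • (b - a)) := by
      rw [← ha0]; exact h.hasFDerivAt
    have := hfd.comp_hasDerivAt 0 hc
    simp only [InnerProductSpace.toDual_apply_apply] at this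
    exact this
  have key : (inner ℝ ga (b - a) : ℝ) ≤ f b - f a := by
    have htends : Filter.Tendsto (slope (fun t : ℝ => f (a + t • (b - a))) 0)
        (nhdsWithin 0 (Set.Ioi 0)) (nhds (inner ℝ ga (b - a) : ℝ)) :=
      (hasDerivAt_iff_tendsto_slope.1 hψ).mono_left
        (nhdsWithin_mono 0 (fun t ht => Set.mem_compl_singleton_iff.2 (ne_of_gt ht)))
    refine le_of_tendsto htends ?_
    filter_upwards [Ioc_mem_nhdsGT_of_mem (by simp : (0:ℝ) ∈ Set.Ico 0 1)] with t ht
    have ht0 : 0 < t := ht.1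
    have hconvpt : f (a + t • (b - a)) ≤ (1 - t) * f a + t * f b := by
      have := hconv.2 (Set.mem_univ a) (Set.mem_univ b)
        (by linarith [ht.2] : (0:ℝ) ≤ 1 - t) (le_of_lt ht0) (by ring)
      have heq : (1 - t) • a + t • b = a + t • (b - a) := by module
      rw [heq] at this
      simpa using this
    rw [slope_def_field]
    have h0 : f (a + (0:ℝ) • (b - a)) = f a := by norm_num
    rw [h0]
    rw [sub_zero, div_le_iff₀ ht0]
    nlinarith
  linarith

lemma prox_fix {H : Type*} [NormedAddCommGroup H] [InnerProductSpace ℝ H] [CompleteSpace H]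
    {f : H → ℝ} {g : H → H} (hgrad : ∀ x, HasGradientAt f (g x) x)
    {α : ℝ} (hα : 0 < α) {w xp : H}
    (hmin : ∀ y, f xp + ‖xp - w‖ ^ 2 / (2 * α) ≤ f y + ‖y - w‖ ^ 2 / (2 * α)) :
    xp - w = -(α • g xp) := by
  set φ : H → ℝ := fun y => f y + ‖y - w‖ ^ 2 / (2 * α) with hφ
  have hq : HasFDerivAt (fun y : H => ‖y - w‖ ^ 2 / (2 * α))
      ((2 * α)⁻¹ • (2 • (innerSL ℝ (xp - w)))) xp := by
    have h0 : HasFDerivAt (fun y : H => y - w) (ContinuousLinearMap.id ℝ H) xp :=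
      (hasFDerivAt_id xp).sub_const w
    have h1 := h0.norm_sq
    have h2 := h1.const_smul ((2 * α)⁻¹ : ℝ)
    have : (fun y : H => (2 * α)⁻¹ • ‖y - w‖ ^ 2) = fun y : H => ‖y - w‖ ^ 2 / (2 * α) := by
      funext y; simp [smul_eq_mul]; ring
    rw [show ((2 * α)⁻¹ • fun x : H => ‖x - w‖ ^ 2) = fun y : H => ‖y - w‖ ^ 2 / (2 * α) from by rw [← this]; rfl] at h2
    rw [ContinuousLinearMap.comp_id] at h2
    exact h2
  have hφ' : HasFDerivAt φ ((InnerProductSpace.toDual ℝ H) (g xp)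
      + (2 * α)⁻¹ • (2 • (innerSL ℝ (xp - w)))) xp := (hgrad xp).hasFDerivAt.add hq
  have hlm : IsLocalMin φ xp := by
    have hm : IsMinOn φ Set.univ xp := fun y _ => hmin y
    exact hm.isLocalMin Filter.univ_mem
  have hzero := hlm.hasFDerivAt_eq_zero hφ'
  have hinner : ∀ u : H, (inner ℝ (g xp) u : ℝ) + (2 * α)⁻¹ * (2 * (inner ℝ (xp - w) u : ℝ)) = 0 := by
    intro u
    have := ContinuousLinearMap.ext_iff.mp hzero u
    simp only [ContinuousLinearMap.add_apply, ContinuousLinearMap.zero_apply,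
      InnerProductSpace.toDual_apply_apply, ContinuousLinearMap.smul_apply, smul_eq_mul,
      ContinuousLinearMap.coe_smul', Pi.smul_apply, innerSL_apply_apply] at this
    simpa [inner_sub_left, mul_inv] using this
  have hvec : g xp + α⁻¹ • (xp - w) = 0 := by
    have h2 := hinner (g xp + α⁻¹ • (xp - w))
    have : (inner ℝ (g xp + α⁻¹ • (xp - w)) (g xp + α⁻¹ • (xp - w)) : ℝ) = 0 := by
      rw [inner_add_left, real_inner_smul_left]
      have hne : (2 * α) ≠ 0 := by positivity
      field_simp at h2 ⊢
      linarith [h2]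
    exact inner_self_eq_zero.mp this
  have := congrArg (fun z => α • z) hvec
  simp only [smul_add, smul_smul, smul_zero] at this
  rw [mul_inv_cancel₀ (ne_of_gt hα), one_smul] at this
  linear_combination (norm := module) this

theorem stmt4 {H : Type*} [NormedAddCommGroup H] [InnerProductSpace ℝ H] [CompleteSpace H]
    (f : H → ℝ) (g : H → H)
    (hconv : ConvexOn ℝ Set.univ f)
    (hgrad : ∀ x, HasGradientAt f (g x) x)
    (α : ℝ) (hα : 0 < α) (e x xp z : H)
    (hmin : ∀ y, f xp + ‖xp - (x + α • e)‖ ^ 2 / (2 * α) ≤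
      f y + ‖y - (x + α • e)‖ ^ 2 / (2 * α))
    (v : H) (hv : v = g x - e) :
    ‖xp - z‖ ^ 2 ≤ ‖x - z‖ ^ 2 - 2 * α * (f x - f z) + α ^ 2 * ‖v‖ ^ 2
      - 2 * α * (inner ℝ e (z - x) : ℝ) - α ^ 2 * ‖g x - g xp‖ ^ 2 := by
  set u := g xp with hu
  set G := g x with hG
  have hfix : xp - (x + α • e) = -(α • u) := prox_fix hgrad hα hmin
  have hxp : xp = x + α • e - α • u := by linear_combination (norm := module) hfix
  have hzxp : z - xp = (z - x) - α • (e - u) := by rw [hxp]; module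
  have hxpz : xp - z = (x - z) + α • (e - u) := by rw [hxp]; module
  have hxpx : xp - x = α • (e - u) := by rw [hxp]; module
  -- atoms
  set P : ℝ := inner ℝ e (z - x) with hP
  set Q : ℝ := inner ℝ u (z - x) with hQ
  set R : ℝ := inner ℝ u (e - u) with hR
  set S : ℝ := inner ℝ G (e - u) with hS
  have h1 : f xp + (Q - α * R) ≤ f z := by
    have := grad_ineq hconv (hgrad xp) z
    rw [hzxp, inner_sub_right, real_inner_smul_right] at this
    simpa [hQ, hR] using this
  have h2 : f x + α * S ≤ f xp := by
    have := grad_ineq hconv (hgrad x) xp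
    rw [hxpx, real_inner_smul_right] at this
    simpa [hS] using this
  have E1 : ‖xp - z‖ ^ 2 = ‖x - z‖ ^ 2 + 2 * α * (-P + Q) + α ^ 2 * ‖e - u‖ ^ 2 := by
    rw [hxpz, norm_add_sq_real, real_inner_smul_right, norm_smul]
    have hc : (inner ℝ (x - z) (e - u) : ℝ) = -P + Q := by
      rw [real_inner_comm, inner_sub_left, show x - z = -(z - x) from (neg_sub z x).symm,
        inner_neg_right, inner_neg_right, hP, hQ]
      ring
    rw [hc, Real.norm_eq_abs, mul_pow, sq_abs]
    ring
  have E2 : ‖G - e‖ ^ 2 = ‖G - u‖ ^ 2 - 2 * (S - R) + ‖e - u‖ ^ 2 := by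
    have hge : G - e = (G - u) - (e - u) := by module
    rw [hge, norm_sub_sq_real, inner_sub_left, hS, hR]
  have hsum : f x - f z ≤ -(α * S) - Q + α * R := by linarith
  have hsum2 : 2 * α * (f x - f z) ≤ 2 * α * (-(α * S) - Q + α * R) :=
    mul_le_mul_of_nonneg_left hsum (by positivity)
  have E2' : α ^ 2 * ‖G - e‖ ^ 2 = α ^ 2 * (‖G - u‖ ^ 2 - 2 * (S - R) + ‖e - u‖ ^ 2) := by
    rw [E2]
  rw [hv, E1]
  nlinarith [hsum2, E2']
end

section
/- Let f_1,…,f_n : H → ℝ be convex differentiable with L-Lipschitz gradients, F = (1/n)∑f_i with minimizer x* (∇F(x*) = 0). Then for any x ∈ H, (1/n)∑_{i=1}^n ‖∇f_i(x)‖² ≤ 4L(F(x) − F(x*)) + (2/n)∑_{i=1}^n ‖∇f_i(x*)‖². -/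
open scoped BigOperators
open scoped RealInnerProductSpace

section Aux

variable {H : Type*} [NormedAddCommGroup H] [InnerProductSpace ℝ H] [CompleteSpace H]

/-- Derivative of a function along a line. -/
lemma aux_line_deriv (f : H → ℝ) (g : H → H) (hg : ∀ z, HasGradientAt f (g z) z)
    (a v : H) (t : ℝ) :
    HasDerivAt (fun s : ℝ => f (a + s • v)) ⟪g (a + t • v), v⟫ t := by
  have hc : HasDerivAt (fun s : ℝ => a + s • v) v t := by
    simpa using ((hasDerivAt_id t).smul_const v).const_add a
  have hf := (hasGradientAt_iff_hasFDerivAt.1 (hg (a + t • v)))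
  have := hf.comp_hasDerivAt t hc
  simpa [InnerProductSpace.toDual_apply_apply, Function.comp_def] using this

/-- First-order condition for convexity. -/
lemma aux_convex_lb (f : H → ℝ) (g : H → H) (hconv : ConvexOn ℝ Set.univ f)
    (hg : ∀ z, HasGradientAt f (g z) z) (y w : H) :
    f y + ⟪g y, w - y⟫ ≤ f w := by
  set v := w - y with hv
  set h : ℝ → ℝ := fun t => f (y + t • v) with hh
  have hcomp : ConvexOn ℝ Set.univ h := by
    have := hconv.comp_affineMap (AffineMap.lineMap y w : ℝ →ᵃ[ℝ] H)
    have heq : (f ∘ (AffineMap.lineMap y w : ℝ →ᵃ[ℝ] H)) = h := by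
      funext t
      simp [h, AffineMap.lineMap_apply_module', hv, add_comm]
    simpa [heq] using this
  have hd : HasDerivAt h ⟪g y, v⟫ 0 := by
    have := aux_line_deriv f g hg y v 0
    simpa using this
  have hslope := hcomp.le_slope_of_hasDerivAt (Set.mem_univ 0) (Set.mem_univ 1)
    (by norm_num) hd
  rw [slope_def_field] at hslope
  have h0 : h 0 = f y := by simp [h]
  have h1 : h 1 = f w := by simp [h, hv]
  rw [h0, h1] at hslope
  have : ⟪g y, v⟫ ≤ f w - f y := by
    simpa using hslope
  linarith

/-- Descent lemma for functions with Lipschitz gradient. -/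
lemma aux_descent (f : H → ℝ) (g : H → H) (L : ℝ) (hL : 0 < L)
    (hg : ∀ z, HasGradientAt f (g z) z)
    (hlip : ∀ x y, ‖g x - g y‖ ≤ L * ‖x - y‖) (z w : H) :
    f w ≤ f z + ⟪g z, w - z⟫ + L / 2 * ‖w - z‖ ^ 2 := by
  set v := w - z with hv
  set h : ℝ → ℝ := fun t => f (z + t • v) with hh
  set d : ℝ → ℝ := fun t => ⟪g (z + t • v), v⟫ with hd
  set ψ : ℝ → ℝ := fun t => h t - t * d 0 - L / 2 * ‖v‖ ^ 2 * t ^ 2 with hψ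
  have hder : ∀ t, HasDerivAt ψ (d t - d 0 - L * ‖v‖ ^ 2 * t) t := by
    intro t
    have h1 : HasDerivAt h (d t) t := aux_line_deriv f g hg z v t
    have h2 : HasDerivAt (fun s : ℝ => s * d 0) (d 0) t := by
      simpa using (hasDerivAt_id t).mul_const (d 0)
    have h3 : HasDerivAt (fun s : ℝ => L / 2 * ‖v‖ ^ 2 * s ^ 2)
        (L / 2 * ‖v‖ ^ 2 * (2 * t)) t := by
      have := (hasDerivAt_pow 2 t).const_mul (L / 2 * ‖v‖ ^ 2)
      simpa [mul_comm, mul_assoc, mul_left_comm] using this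
    have := (h1.sub h2).sub h3
    exact this.congr_deriv (by ring)
  have hnonpos : ∀ t ∈ Set.Ioo (0 : ℝ) 1, d t - d 0 - L * ‖v‖ ^ 2 * t ≤ 0 := by
    intro t ht
    have ht0 : 0 ≤ t := le_of_lt ht.1
    have hdt : d t - d 0 = ⟪g (z + t • v) - g z, v⟫ := by
      simp [hd, inner_sub_left]
    have hcs : ⟪g (z + t • v) - g z, v⟫ ≤ ‖g (z + t • v) - g z‖ * ‖v‖ :=
      real_inner_le_norm _ _
    have hlipbound : ‖g (z + t • v) - g z‖ ≤ L * (t * ‖v‖) := by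
      have := hlip (z + t • v) z
      simpa [norm_smul, abs_of_nonneg ht0] using this
    have hnv : (0 : ℝ) ≤ ‖v‖ := norm_nonneg _
    nlinarith [mul_le_mul_of_nonneg_right hlipbound hnv]
  have hanti : AntitoneOn ψ (Set.Icc (0 : ℝ) 1) := by
    apply antitoneOn_of_deriv_nonpos (convex_Icc 0 1)
    · exact fun t _ => ((hder t).continuousAt).continuousWithinAt
    · intro t ht
      exact ((hder t).differentiableAt).differentiableWithinAt
    · intro t ht
      rw [interior_Icc] at ht
      rw [(hder t).deriv]
      exact hnonpos t ht
  have hle : ψ 1 ≤ ψ 0 := hanti (by norm_num) (by norm_num) zero_le_one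
  have h0 : ψ 0 = f z := by simp [ψ, h]
  have h1 : ψ 1 = f w - d 0 - L / 2 * ‖v‖ ^ 2 := by
    simp [ψ, h, hv]
  have hd0 : d 0 = ⟪g z, w - z⟫ := by simp [hd, hv]
  rw [h0, h1, hd0] at hle
  linarith

/-- Co-coercivity type bound. -/
lemma aux_coco (f : H → ℝ) (g : H → H) (L : ℝ) (hL : 0 < L)
    (hconv : ConvexOn ℝ Set.univ f)
    (hg : ∀ z, HasGradientAt f (g z) z)
    (hlip : ∀ x y, ‖g x - g y‖ ≤ L * ‖x - y‖) (x y : H) :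
    ‖g x - g y‖ ^ 2 ≤ 2 * L * (f x - f y - ⟪g y, x - y⟫) := by
  set w : H := x - L⁻¹ • (g x - g y) with hw
  have hdesc := aux_descent f g L hL hg hlip x w
  have hlb := aux_convex_lb f g hconv hg y w
  have hwx : w - x = -(L⁻¹ • (g x - g y)) := by simp [hw]
  have e1 : ⟪g x, w - x⟫ = -(L⁻¹ * ⟪g x, g x - g y⟫) := by
    rw [hwx]
    simp [inner_smul_right]
  have e2 : ‖w - x‖ ^ 2 = L⁻¹ ^ 2 * ‖g x - g y‖ ^ 2 := by
    rw [hwx]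
    rw [norm_neg, norm_smul, Real.norm_eq_abs, mul_pow, sq_abs]
  have e3 : ⟪g y, w - y⟫ = ⟪g y, x - y⟫ - L⁻¹ * ⟪g y, g x - g y⟫ := by
    have : w - y = (x - y) - L⁻¹ • (g x - g y) := by
      rw [hw]; abel
    rw [this, inner_sub_right, inner_smul_right]
  have e4 : ⟪g x, g x - g y⟫ - ⟪g y, g x - g y⟫ = ‖g x - g y‖ ^ 2 := by
    rw [← inner_sub_left, real_inner_self_eq_norm_sq]
  rw [e1, e2] at hdesc
  rw [e3] at hlb
  have hLne : L ≠ 0 := ne_of_gt hL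
  have e5 : L⁻¹ * ⟪g x, g x - g y⟫ - L⁻¹ * ⟪g y, g x - g y⟫
      = L⁻¹ * ‖g x - g y‖ ^ 2 := by rw [← mul_sub, e4]
  have hid : L / 2 * (L⁻¹ ^ 2 * ‖g x - g y‖ ^ 2) = L⁻¹ / 2 * ‖g x - g y‖ ^ 2 := by
    field_simp
  rw [hid] at hdesc
  have key : L⁻¹ / 2 * ‖g x - g y‖ ^ 2 ≤ f x - f y - ⟪g y, x - y⟫ := by
    linarith
  have hcancel : L * L⁻¹ = 1 := mul_inv_cancel₀ hLne
  calc ‖g x - g y‖ ^ 2 = 2 * L * (L⁻¹ / 2 * ‖g x - g y‖ ^ 2) := by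
        field_simp
    _ ≤ 2 * L * (f x - f y - ⟪g y, x - y⟫) :=
        mul_le_mul_of_nonneg_left key (by positivity)

end Aux

theorem stmt13 {H : Type*} [NormedAddCommGroup H] [InnerProductSpace ℝ H] [CompleteSpace H]
    (n : ℕ) (hn : 1 ≤ n) (f : Fin n → H → ℝ) (g : Fin n → H → H) (L : ℝ) (hL : 0 < L)
    (hconv : ∀ i, ConvexOn ℝ Set.univ (f i))
    (hgrad : ∀ i x, HasGradientAt (f i) (g i x) x)
    (hlip : ∀ i x y, ‖g i x - g i y‖ ≤ L * ‖x - y‖)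
    (xs : H) (hxs : (1 / (n : ℝ)) • ∑ i, g i xs = 0) (x : H) :
    (1 / (n : ℝ)) * ∑ i, ‖g i x‖ ^ 2 ≤
      4 * L * ((1 / (n : ℝ)) * ∑ i, f i x - (1 / (n : ℝ)) * ∑ i, f i xs)
        + (2 / (n : ℝ)) * ∑ i, ‖g i xs‖ ^ 2 := by
  have hnpos : (0 : ℝ) < n := by exact_mod_cast hn
  have hnne : (1 / (n : ℝ)) ≠ 0 := by positivity
  have hS : ∑ i, g i xs = 0 := by
    rcases smul_eq_zero.1 hxs with h | h
    · exact absurd h hnne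
    · exact h
  have hinner0 : ∑ i, ⟪g i xs, x - xs⟫ = (0 : ℝ) := by
    rw [← sum_inner, hS, inner_zero_left]
  -- per-term bound
  have hterm : ∀ i, ‖g i x‖ ^ 2 ≤
      4 * L * (f i x - f i xs - ⟪g i xs, x - xs⟫) + 2 * ‖g i xs‖ ^ 2 := by
    intro i
    have hcoco := aux_coco (f i) (g i) L hL (hconv i) (hgrad i) (hlip i) x xs
    have htri : ‖g i x‖ ≤ ‖g i x - g i xs‖ + ‖g i xs‖ := by
      simpa using norm_add_le (g i x - g i xs) (g i xs)
    nlinarith [hcoco, htri, norm_nonneg (g i x - g i xs), norm_nonneg (g i xs),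
      norm_nonneg (g i x), sq_nonneg (‖g i x - g i xs‖ - ‖g i xs‖),
      mul_self_le_mul_self (norm_nonneg (g i x)) htri]
  have key : ∑ i, ‖g i x‖ ^ 2 ≤
      4 * L * (∑ i, f i x - ∑ i, f i xs) + 2 * ∑ i, ‖g i xs‖ ^ 2 := by
    calc ∑ i, ‖g i x‖ ^ 2
        ≤ ∑ i, (4 * L * (f i x - f i xs - ⟪g i xs, x - xs⟫) + 2 * ‖g i xs‖ ^ 2) :=
          Finset.sum_le_sum fun i _ => hterm i
      _ = 4 * L * (∑ i, f i x - ∑ i, f i xs - ∑ i, ⟪g i xs, x - xs⟫)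
            + 2 * ∑ i, ‖g i xs‖ ^ 2 := by
          rw [Finset.sum_add_distrib, ← Finset.mul_sum, ← Finset.mul_sum]
          congr 2
          rw [Finset.sum_sub_distrib, Finset.sum_sub_distrib]
      _ = 4 * L * (∑ i, f i x - ∑ i, f i xs) + 2 * ∑ i, ‖g i xs‖ ^ 2 := by
          rw [hinner0]; ring
  calc (1 / (n : ℝ)) * ∑ i, ‖g i x‖ ^ 2
      ≤ (1 / (n : ℝ)) * (4 * L * (∑ i, f i x - ∑ i, f i xs) + 2 * ∑ i, ‖g i xs‖ ^ 2) :=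
        mul_le_mul_of_nonneg_left key (by positivity)
    _ = 4 * L * ((1 / (n : ℝ)) * ∑ i, f i x - (1 / (n : ℝ)) * ∑ i, f i xs)
          + (2 / (n : ℝ)) * ∑ i, ‖g i xs‖ ^ 2 := by ring
end
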